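/- The limit inferior, as n → ∞, of PPL_t(n) / ln n equals 0; indeed PPL_t(4^m) = 1 for all m ≥ 0. -/

import Mathlib

/-- The Thue–Morse word: `tm n` is the number of ones (sum of binary digits)
in the binary expansion of `n`, taken mod 2. -/
def tm (n : ℕ) : ℕ := (Nat.digits 2 n).sum % 2

/-- `ps` is a factorization of the finite word `w` into nonempty palindromes. -/
def IsPalDecomp (w : List ℕ) (ps : List (List ℕ)) : Prop :=
  ps.flatten = w ∧ ∀ p ∈ ps, p ≠ [] ∧ p.Palindrome

/-- The palindromic length of a finite word: the least number of nonempty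
palindromes whose concatenation is the word (0 for the empty word). -/
noncomputable def palLen (w : List ℕ) : ℕ :=
  sInf {k | ∃ ps, ps.length = k ∧ IsPalDecomp w ps}

/-- `pplTM n` is the palindromic length of the prefix of length `n`
of the Thue–Morse word. -/
noncomputable def pplTM (n : ℕ) : ℕ := palLen ((List.range n).map tm)

lemma digitsum_rec (n : ℕ) :
    (Nat.digits 2 n).sum = n % 2 + (Nat.digits 2 (n / 2)).sum := by
  rcases Nat.eq_zero_or_pos n with h | h
  · simp [h]
  · rw [Nat.digits_def' (by norm_num) h]; simp

lemma tm_compl : ∀ k n, n < 2 ^ k →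
    ((Nat.digits 2 (2 ^ k - 1 - n)).sum + (Nat.digits 2 n).sum) % 2 = k % 2 := by
  intro k
  induction k with
  | zero => intro n hn; interval_cases n; simp
  | succ k ih =>
    intro n hn
    have hq : n / 2 < 2 ^ k := by
      have : 2 ^ (k + 1) = 2 * 2 ^ k := by ring
      omega
    have h1 : 2 ^ (k + 1) - 1 - n = 2 * (2 ^ k - 1 - n / 2) + (1 - n % 2) := by
      have h2 : 2 ^ (k + 1) = 2 * 2 ^ k := by ring
      have := Nat.mod_two_eq_zero_or_one n
      omega
    have hm2 : (2 ^ (k + 1) - 1 - n) % 2 = 1 - n % 2 := by omega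
    have hd2 : (2 ^ (k + 1) - 1 - n) / 2 = 2 ^ k - 1 - n / 2 := by omega
    have e1 := digitsum_rec (2 ^ (k + 1) - 1 - n)
    have e2 := digitsum_rec n
    rw [hm2, hd2] at e1
    have := ih (n / 2) hq
    have := Nat.mod_two_eq_zero_or_one n
    omega

lemma tm_symm {m i : ℕ} (hi : i < 4 ^ m) : tm (4 ^ m - 1 - i) = tm i := by
  have h4 : (4 : ℕ) ^ m = 2 ^ (2 * m) := by
    rw [pow_mul]; norm_num
  have := tm_compl (2 * m) i (by omega)
  rw [← h4] at this
  unfold tm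
  omega

lemma tm_prefix_palindrome (m : ℕ) : ((List.range (4 ^ m)).map tm).Palindrome := by
  apply List.Palindrome.of_reverse_eq
  apply List.ext_getElem
  · simp
  · intro i h1 h2
    simp only [List.length_reverse, List.length_map, List.length_range] at h2
    rw [List.getElem_reverse]
    simp only [List.getElem_map, List.getElem_range, List.length_map, List.length_range]
    exact tm_symm h2

lemma pplTM_pow4 (m : ℕ) : pplTM (4 ^ m) = 1 := by
  unfold pplTM palLen
  set L := (List.range (4 ^ m)).map tm with hL
  have hne : L ≠ [] := by
    simp [hL, List.map_eq_nil_iff, List.range_eq_nil]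
  have h1 : 1 ∈ {k | ∃ ps : List (List ℕ), ps.length = k ∧ IsPalDecomp L ps} := by
    exact ⟨[L], rfl, by simp [IsPalDecomp], fun p hp => by
      simp at hp; subst hp; exact ⟨hne, tm_prefix_palindrome m⟩⟩
  have h0 : 0 ∉ {k | ∃ ps : List (List ℕ), ps.length = k ∧ IsPalDecomp L ps} := by
    rintro ⟨ps, hlen, hflat, -⟩
    rw [List.length_eq_zero_iff] at hlen
    subst hlen
    simp at hflat
    exact hne hflat
  have hle := Nat.sInf_le h1
  have : sInf {k | ∃ ps : List (List ℕ), ps.length = k ∧ IsPalDecomp L ps} ≠ 0 := by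
    intro hz
    exact h0 (hz ▸ Nat.sInf_mem ⟨1, h1⟩)
  omega

lemma tendsto_aux : Filter.Tendsto (fun m : ℕ => (1 : ℝ) / Real.log ((4 : ℕ) ^ m))
    Filter.atTop (nhds 0) := by
  have h : ∀ m : ℕ, (1 : ℝ) / Real.log ((4 : ℕ) ^ m) = ((m : ℝ) * Real.log 4)⁻¹ := by
    intro m
    rw [one_div, Real.log_pow]
    norm_num
  simp only [h]
  apply Filter.Tendsto.inv_tendsto_atTop
  apply Filter.Tendsto.atTop_mul_const (by positivity : (0:ℝ) < Real.log 4)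
  exact tendsto_natCast_atTop_atTop

/-- The limit inferior of `PPL_t(n) / ln n` equals 0; indeed
`PPL_t(4^m) = 1` for all `m ≥ 0`. -/
theorem pplTM_liminf :
    Filter.liminf (fun n : ℕ => (pplTM n : ℝ) / Real.log n) Filter.atTop = 0 ∧
    ∀ m : ℕ, pplTM (4 ^ m) = 1 := by
  refine ⟨?_, pplTM_pow4⟩
  set f : ℕ → ℝ := fun n => (pplTM n : ℝ) / Real.log n with hf
  have hnn : ∀ n, 0 ≤ f n := fun n => by
    apply div_nonneg (by positivity)
    exact Real.log_natCast_nonneg n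
  have hfreq : ∀ ε : ℝ, 0 < ε → ∃ᶠ n in Filter.atTop, f n ≤ ε := by
    intro ε hε
    have hg : ∀ m : ℕ, f (4 ^ m) = 1 / Real.log ((4 : ℕ) ^ m) := by
      intro m
      simp [hf, pplTM_pow4 m]
    rw [Filter.frequently_atTop]
    intro a
    obtain ⟨M, hM⟩ := Filter.eventually_atTop.mp
      (tendsto_aux.eventually_le_const hε)
    refine ⟨4 ^ (max a M), ?_, ?_⟩
    · calc a ≤ max a M := le_max_left _ _
        _ ≤ 4 ^ (max a M) := (Nat.lt_pow_self (by norm_num)).le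
    · rw [hg]; exact hM _ (le_max_right _ _)
  have hbdd : Filter.IsBoundedUnder (· ≥ ·) Filter.atTop f :=
    Filter.isBoundedUnder_of ⟨0, hnn⟩
  have hupper : ∀ ε : ℝ, 0 < ε →
      Filter.liminf f Filter.atTop ≤ ε := fun ε hε =>
    Filter.liminf_le_of_frequently_le (hfreq ε hε) hbdd
  have hle : Filter.liminf f Filter.atTop ≤ 0 := by
    refine le_of_forall_pos_le_add fun ε hε => ?_
    simpa using hupper ε hε
  have hge : 0 ≤ Filter.liminf f Filter.atTop := by
    apply Filter.le_liminf_of_le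
    · exact Filter.IsCoboundedUnder.of_frequently_le (hfreq 1 one_pos)
    · exact Filter.Eventually.of_forall hnn
  linarith
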